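/- Let a < b, let y : [a,b] → [0,∞) be absolutely continuous, and let z, g, h : (a,b) → [0,∞) be integrable functions such that y'(t) + z(t) ≤ g(t) y(t) + h(t) for almost every t ∈ (a,b). Then y(b) + ∫_a^b z(t) dt ≤ ( y(a) + ∫_a^b h(t) dt ) · exp( ∫_a^b g(t) dt ). -/

import Mathlib

open MeasureTheory Set Filter

private lemma gronwall_kernel (a : ℝ) (γ : ℝ → ENNReal) (hγ : Measurable γ) (t : ℝ) :
    ∀ (k : ℕ) (u : ℝ), a ≤ u → u ≤ t →
      ((k : ENNReal) + 1) * (∫⁻ s in Ioo u t, γ s * (∫⁻ v in Ioo a s, γ v) ^ k)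
        + (∫⁻ v in Ioo a u, γ v) ^ (k + 1) ≤ (∫⁻ v in Ioo a t, γ v) ^ (k + 1) := by
  set L : ℝ → ENNReal := fun r => ∫⁻ v in Ioo a r, γ v with hL
  have hLmono : Monotone L := fun r r' hrr' =>
    lintegral_mono_set (Ioo_subset_Ioo_right hrr')
  have hLmeas : Measurable L := hLmono.measurable
  have F1 : ∀ u v : ℝ, a ≤ u → u ≤ v → L v = L u + ∫⁻ s in Ioo u v, γ s := by
    intro u v hau huv
    have h1 : volume.restrict (Ioo a v) = volume.restrict (Ioc a v) :=
      Measure.restrict_congr_set Ioo_ae_eq_Ioc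
    have h2 : volume.restrict (Ioo a u) = volume.restrict (Ioc a u) :=
      Measure.restrict_congr_set Ioo_ae_eq_Ioc
    have h3 : volume.restrict (Ioo u v) = volume.restrict (Ioc u v) :=
      Measure.restrict_congr_set Ioo_ae_eq_Ioc
    simp only [hL, h1, h2, h3]
    rw [← Ioc_union_Ioc_eq_Ioc hau huv,
      lintegral_union measurableSet_Ioc (Set.Ioc_disjoint_Ioc_of_le le_rfl)]
  intro k
  induction k with
  | zero =>
    intro u hau hut
    simp only [pow_one, pow_zero, mul_one, Nat.cast_zero, zero_add, one_mul]
    rw [add_comm, ← F1 u t hau hut]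
  | succ k IH =>
    intro u hau hut
    set Jk : ℝ → ENNReal := fun v => ∫⁻ s in Ioo v t, γ s * L s ^ k with hJk
    have hJkmeas : Measurable Jk := by
      have : Antitone Jk := fun v v' hvv' =>
        lintegral_mono_set (Ioo_subset_Ioo_left hvv')
      exact this.measurable
    set W : ENNReal := ∫⁻ s in Ioo u t, (γ s * L s ^ k) * (∫⁻ v in Ioo u s, γ v) with hW
    have hmeas1 : Measurable fun s => γ s * L s ^ k := hγ.mul (hLmeas.pow_const k)
    have hi : (∫⁻ s in Ioo u t, γ s * L s ^ (k + 1))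
        = L u * (Jk u) + W := by
      have heq : ∀ᵐ s : ℝ, s ∈ Ioo u t → γ s * L s ^ (k+1)
          = L u * (γ s * L s ^ k) + (γ s * L s ^ k) * (∫⁻ v in Ioo u s, γ v) := by
        filter_upwards with s hs
        rw [pow_succ, ← mul_assoc, F1 u s hau hs.1.le]
        ring
      rw [setLIntegral_congr_fun_ae measurableSet_Ioo heq, lintegral_add_left (by fun_prop),
        lintegral_const_mul _ hmeas1]
    have hii : W = ∫⁻ v in Ioo u t, γ v * Jk v := by
      have swap : (∫⁻ s in Ioo u t, ∫⁻ v in Ioo u t, if v < s then (γ s * L s ^ k) * γ v else 0)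
          = ∫⁻ v in Ioo u t, ∫⁻ s in Ioo u t, if v < s then (γ s * L s ^ k) * γ v else 0 := by
        apply lintegral_lintegral_swap
        apply Measurable.aemeasurable
        apply Measurable.ite (measurableSet_lt measurable_snd measurable_fst)
        · exact (hmeas1.comp measurable_fst).mul (hγ.comp measurable_snd)
        · exact measurable_const
      have lhs : W = ∫⁻ s in Ioo u t, ∫⁻ v in Ioo u t,
          if v < s then (γ s * L s ^ k) * γ v else 0 := by
        rw [hW]
        apply setLIntegral_congr_fun_ae measurableSet_Ioo
        filter_upwards with s hs
        have hind : ∀ v, (if v < s then (γ s * L s ^ k) * γ v else 0)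
            = (γ s * L s ^ k) * ((Iio s).indicator γ v) := by
          intro v
          by_cases hv : v < s <;> simp [Set.indicator, hv]
        have hset : Iio s ∩ Ioo u t = Ioo u s := by
          ext v
          simp only [mem_inter_iff, mem_Iio, mem_Ioo]
          exact ⟨fun ⟨h1, h2, h3⟩ => ⟨h2, h1⟩, fun ⟨h1, h2⟩ => ⟨h2, h1, lt_trans h2 hs.2⟩⟩
        simp only [hind]
        rw [lintegral_const_mul _ (hγ.indicator measurableSet_Iio),
          lintegral_indicator measurableSet_Iio, Measure.restrict_restrict measurableSet_Iio,
          hset]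
      have rhs : (∫⁻ v in Ioo u t, ∫⁻ s in Ioo u t,
          if v < s then (γ s * L s ^ k) * γ v else 0)
          = ∫⁻ v in Ioo u t, γ v * Jk v := by
        apply setLIntegral_congr_fun_ae measurableSet_Ioo
        filter_upwards with v hv
        have hind : ∀ s, (if v < s then (γ s * L s ^ k) * γ v else 0)
            = ((Ioi v).indicator (fun s => γ s * L s ^ k) s) * γ v := by
          intro s
          by_cases hs : v < s <;> simp [Set.indicator, hs]
        have hset : Ioi v ∩ Ioo u t = Ioo v t := by
          ext s
          simp only [mem_inter_iff, mem_Ioi, mem_Ioo]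
          exact ⟨fun ⟨h1, h2, h3⟩ => ⟨h1, h3⟩, fun ⟨h1, h2⟩ => ⟨h1, lt_trans hv.1 h1, h2⟩⟩
        simp only [hind]
        rw [lintegral_mul_const _ (hmeas1.indicator measurableSet_Ioi),
          lintegral_indicator measurableSet_Ioi, Measure.restrict_restrict measurableSet_Ioi,
          hset, mul_comm]
      rw [lhs, swap, rhs]
    have hiii : ((k : ENNReal) + 1) * W + (∫⁻ s in Ioo u t, γ s * L s ^ (k + 1))
        ≤ L t ^ (k + 1) * (∫⁻ s in Ioo u t, γ s) := by
      rw [hii,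
        ← lintegral_const_mul _ (by fun_prop : Measurable fun v => γ v * Jk v),
        ← lintegral_add_left (by fun_prop : Measurable fun v => ((k : ENNReal) + 1) * (γ v * Jk v)),
        ← lintegral_const_mul _ hγ]
      apply setLIntegral_mono' measurableSet_Ioo
      intro v hv
      calc ((k : ENNReal) + 1) * (γ v * Jk v) + γ v * L v ^ (k + 1)
          = γ v * (((k : ENNReal) + 1) * Jk v + L v ^ (k + 1)) := by ring
        _ ≤ γ v * L t ^ (k + 1) :=
            mul_le_mul_right (IH v (le_trans hau hv.1.le) hv.2.le) _
        _ = L t ^ (k + 1) * γ v := mul_comm _ _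
    have hIHu := IH u hau hut
    push_cast
    calc ((k : ENNReal) + 1 + 1) * (∫⁻ s in Ioo u t, γ s * L s ^ (k + 1)) + L u ^ (k + 1 + 1)
        = L u * (((k : ENNReal) + 1) * Jk u + L u ^ (k + 1))
          + (((k : ENNReal) + 1) * W + (∫⁻ s in Ioo u t, γ s * L s ^ (k + 1))) := by
          rw [hi]; ring
      _ ≤ L u * L t ^ (k + 1) + L t ^ (k + 1) * (∫⁻ s in Ioo u t, γ s) :=
          add_le_add (mul_le_mul_right hIHu _) hiii
      _ = L t ^ (k + 1) * (L u + ∫⁻ s in Ioo u t, γ s) := by ring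
      _ = L t ^ (k + 1 + 1) := by rw [← F1 u t hau hut]; ring

private lemma exists_meas_version {a b : ℝ} {f : ℝ → ℝ} (hf : IntegrableOn f (Ioo a b)) :
    ∃ f₀ : ℝ → ℝ, Measurable f₀ ∧ f₀ =ᵐ[volume.restrict (Ioo a b)] f
      ∧ Integrable f₀ volume := by
  refine ⟨(Ioo a b).indicator (fun s => hf.aestronglyMeasurable.mk f s),
    (hf.aestronglyMeasurable.stronglyMeasurable_mk.measurable).indicator measurableSet_Ioo,
    ?_, ?_⟩
  · filter_upwards [ae_restrict_mem measurableSet_Ioo,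
      hf.aestronglyMeasurable.ae_eq_mk] with s hs hmk
    simp only [Set.indicator_of_mem hs, ← hmk]
  · apply MeasureTheory.IntegrableOn.integrable_indicator _ measurableSet_Ioo
    apply (hf.congr hf.aestronglyMeasurable.ae_eq_mk)

private lemma exists_nice_version {a b : ℝ} {f : ℝ → ℝ} (hf : IntegrableOn f (Ioo a b))
    (hnn : ∀ t ∈ Ioo a b, 0 ≤ f t) :
    ∃ f₀ : ℝ → ℝ, Measurable f₀ ∧ (∀ s, 0 ≤ f₀ s)
      ∧ f₀ =ᵐ[volume.restrict (Ioo a b)] f ∧ Integrable f₀ volume := by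
  obtain ⟨f₁, h₁meas, h₁ae, h₁int⟩ := exists_meas_version hf
  refine ⟨fun s => max (f₁ s) 0, h₁meas.max measurable_const,
    fun s => le_max_right _ _, ?_, ?_⟩
  · filter_upwards [ae_restrict_mem measurableSet_Ioo, h₁ae] with s hs hmk
    rw [hmk, max_eq_left (hnn s hs)]
  · exact h₁int.sup (integrable_zero _ _ _)

/-- A Gronwall-type inequality: if `y : [a,b] → [0,∞)` is absolutely
continuous (encoded by the integral representation `y t = y a + ∫_a^t y'`
with `y'` integrable, `y'` being the a.e. derivative of `y`), the functions
`z, g, h : (a,b) → [0,∞)` are integrable, and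
`y'(t) + z(t) ≤ g(t) y(t) + h(t)` for a.e. `t ∈ (a,b)`, then
`y(b) + ∫_a^b z ≤ (y(a) + ∫_a^b h) · exp(∫_a^b g)`. -/
theorem gronwall_inequality_with_dissipation
    (a b : ℝ) (hab : a < b) (y y' z g h : ℝ → ℝ)
    (hy_nonneg : ∀ t ∈ Icc a b, 0 ≤ y t)
    (hy'_int : IntegrableOn y' (Ioo a b))
    (hy_ac : ∀ t ∈ Icc a b, y t = y a + ∫ s in Ioo a t, y' s)
    (hz_nonneg : ∀ t ∈ Ioo a b, 0 ≤ z t) (hz_int : IntegrableOn z (Ioo a b))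
    (hg_nonneg : ∀ t ∈ Ioo a b, 0 ≤ g t) (hg_int : IntegrableOn g (Ioo a b))
    (hh_nonneg : ∀ t ∈ Ioo a b, 0 ≤ h t) (hh_int : IntegrableOn h (Ioo a b))
    (hineq : ∀ᵐ t ∂(volume.restrict (Ioo a b)), y' t + z t ≤ g t * y t + h t) :
    y b + ∫ t in Ioo a b, z t
      ≤ (y a + ∫ t in Ioo a b, h t) * Real.exp (∫ t in Ioo a b, g t) := by
  have hab' : a ≤ b := hab.le
  have haI : a ∈ Icc a b := ⟨le_refl a, hab'⟩
  have hbI : b ∈ Icc a b := ⟨hab', le_refl b⟩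
  obtain ⟨g₀, hg₀meas, hg₀nn, hg₀ae, hg₀int⟩ := exists_nice_version hg_int hg_nonneg
  obtain ⟨z₀, hz₀meas, hz₀nn, hz₀ae, hz₀int⟩ := exists_nice_version hz_int hz_nonneg
  obtain ⟨w₀, hw₀meas, hw₀ae, hw₀int⟩ := exists_meas_version hy'_int
  -- congruence of set integrals on Ioo a t for t ≤ b
  have key : ∀ (f₀ f : ℝ → ℝ), f₀ =ᵐ[volume.restrict (Ioo a b)] f → ∀ t, t ≤ b →
      (∫ s in Ioo a t, f₀ s) = ∫ s in Ioo a t, f s := by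
    intro f₀ f hae t ht
    exact integral_congr_ae
      (ae_restrict_of_ae_restrict_of_subset (Ioo_subset_Ioo_right ht) hae)
  -- the primitive of g₀ and its ENNReal counterpart
  set γ : ℝ → ENNReal := fun s => ENNReal.ofReal (g₀ s) with hγdef
  have hγmeas : Measurable γ := hg₀meas.ennreal_ofReal
  set G : ℝ → ℝ := fun t => ∫ s in Ioo a t, g₀ s with hGdef
  have hGnn : ∀ t, 0 ≤ G t := fun t =>
    setIntegral_nonneg measurableSet_Ioo (fun s _ => hg₀nn s)
  have hGmono : Monotone G := fun t t' htt' =>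
    setIntegral_mono_set hg₀int.integrableOn (Eventually.of_forall fun s => hg₀nn s)
      ((Ioo_subset_Ioo_right htt').eventuallyLE)
  have hGmeas : Measurable G := hGmono.measurable
  have hLG : ∀ t, (∫⁻ s in Ioo a t, γ s) = ENNReal.ofReal (G t) := fun t =>
    (ofReal_integral_eq_lintegral_ofReal hg₀int.integrableOn
      (Eventually.of_forall fun s => hg₀nn s)).symm
  -- real version of the kernel inequality
  have C_real : ∀ (k : ℕ), ∀ t ∈ Icc a b,
      (∫ s in Ioo a t, g₀ s * G s ^ k) ≤ G t ^ (k+1) / ((k:ℝ)+1) := by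
    intro k t ht
    have hIknn : ∀ s, 0 ≤ g₀ s * G s ^ k := fun s =>
      mul_nonneg (hg₀nn s) (pow_nonneg (hGnn s) k)
    have hIk : IntegrableOn (fun s => g₀ s * G s ^ k) (Ioo a t) := by
      apply Integrable.mono' ((hg₀int.integrableOn).mul_const (G b ^ k))
        ((by fun_prop : Measurable fun s => g₀ s * G s ^ k).aestronglyMeasurable)
      filter_upwards [ae_restrict_mem measurableSet_Ioo] with s hs
      rw [Real.norm_eq_abs, abs_of_nonneg (hIknn s)]
      exact mul_le_mul_of_nonneg_left
        (pow_le_pow_left₀ (hGnn s) (hGmono (hs.2.le.trans ht.2)) k) (hg₀nn s)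
    have hker := gronwall_kernel a γ hγmeas t k a (le_refl a) ht.1
    rw [Set.Ioo_self] at hker
    simp only [Measure.restrict_empty, lintegral_zero_measure,
      zero_pow (Nat.succ_ne_zero k), add_zero] at hker
    have heq : (∫⁻ s in Ioo a t, γ s * (∫⁻ v in Ioo a s, γ v) ^ k)
        = ENNReal.ofReal (∫ s in Ioo a t, g₀ s * G s ^ k) := by
      rw [ofReal_integral_eq_lintegral_ofReal hIk (Eventually.of_forall hIknn)]
      apply lintegral_congr fun s => ?_
      rw [hLG s, ENNReal.ofReal_mul (hg₀nn s), ENNReal.ofReal_pow (hGnn s)]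
    rw [heq, hLG t] at hker
    have hcast : ((k : ENNReal) + 1) = ENNReal.ofReal ((k:ℝ)+1) := by
      rw [ENNReal.ofReal_add (Nat.cast_nonneg k) zero_le_one, ENNReal.ofReal_natCast,
        ENNReal.ofReal_one]
    have hknn : (0:ℝ) ≤ (k:ℝ)+1 := by positivity
    rw [hcast, ← ENNReal.ofReal_mul hknn, ← ENNReal.ofReal_pow (hGnn t)] at hker
    have hreal : ((k:ℝ)+1) * (∫ s in Ioo a t, g₀ s * G s ^ k) ≤ G t ^ (k+1) :=
      (ENNReal.ofReal_le_ofReal_iff (pow_nonneg (hGnn t) _)).mp hker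
    rw [le_div_iff₀ (by positivity : (0:ℝ) < (k:ℝ)+1)]
    linarith
  -- integrability of g₀ * G^k on subintervals
  have hterm_int : ∀ (k : ℕ) (t : ℝ), t ≤ b →
      IntegrableOn (fun s => g₀ s * G s ^ k) (Ioo a t) := by
    intro k t ht
    apply Integrable.mono' ((hg₀int.integrableOn).mul_const (G b ^ k))
      ((by fun_prop : Measurable fun s => g₀ s * G s ^ k).aestronglyMeasurable)
    filter_upwards [ae_restrict_mem measurableSet_Ioo] with s hs
    rw [Real.norm_eq_abs, abs_of_nonneg (mul_nonneg (hg₀nn s) (pow_nonneg (hGnn s) k))]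
    exact mul_le_mul_of_nonneg_left
      (pow_le_pow_left₀ (hGnn s) (hGmono (hs.2.le.trans ht)) k) (hg₀nn s)
  -- a measurable function agreeing with y on Icc a b
  have hw₀pos_int : Integrable (fun s => max (w₀ s) 0) volume :=
    hw₀int.sup (integrable_zero _ _ _)
  have hw₀neg_int : Integrable (fun s => max (-w₀ s) 0) volume :=
    hw₀int.neg.sup (integrable_zero _ _ _)
  set P : ℝ → ℝ := fun t =>
    (∫ s in Ioo a t, max (w₀ s) 0) - ∫ s in Ioo a t, max (-w₀ s) 0 with hPdef
  have hPmeas : Measurable P := by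
    have h1 : Monotone fun t => ∫ s in Ioo a t, max (w₀ s) 0 := fun t t' htt' =>
      setIntegral_mono_set hw₀pos_int.integrableOn
        (Eventually.of_forall fun s => le_max_right _ _)
        ((Ioo_subset_Ioo_right htt').eventuallyLE)
    have h2 : Monotone fun t => ∫ s in Ioo a t, max (-w₀ s) 0 := fun t t' htt' =>
      setIntegral_mono_set hw₀neg_int.integrableOn
        (Eventually.of_forall fun s => le_max_right _ _)
        ((Ioo_subset_Ioo_right htt').eventuallyLE)
    exact h1.measurable.sub h2.measurable
  have hyP : ∀ t ∈ Icc a b, y t = y a + P t := by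
    intro t ht
    rw [hy_ac t ht]
    congr 1
    have hPt : P t = ∫ s in Ioo a t, w₀ s := by
      rw [hPdef]
      dsimp only
      rw [← integral_sub hw₀pos_int.integrableOn hw₀neg_int.integrableOn]
      exact integral_congr_ae (Eventually.of_forall fun s => max_zero_sub_eq_self (w₀ s))
    rw [hPt, key w₀ y' hw₀ae t ht.2]
  -- bound on y over Icc a b
  set My : ℝ := y a + ∫ s in Ioo a b, |y' s| with hMydef
  have hyMy : ∀ t ∈ Icc a b, y t ≤ My := by
    intro t ht
    have hsub : Ioo a t ⊆ Ioo a b := Ioo_subset_Ioo_right ht.2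
    have h1 : (∫ s in Ioo a t, y' s) ≤ ∫ s in Ioo a t, |y' s| := by
      refine le_trans (le_abs_self _) ?_
      have hn := norm_integral_le_integral_norm (f := y') (μ := volume.restrict (Ioo a t))
      simpa only [Real.norm_eq_abs] using hn
    have h2 : (∫ s in Ioo a t, |y' s|) ≤ ∫ s in Ioo a b, |y' s| :=
      setIntegral_mono_set hy'_int.abs
        (Eventually.of_forall fun s => abs_nonneg _) hsub.eventuallyLE
    rw [hy_ac t ht, hMydef]
    linarith
  -- the function Y and its bounds
  set Y : ℝ → ℝ := fun t => y t + ∫ s in Ioo a t, z₀ s with hYdef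
  set M : ℝ := My + ∫ s in Ioo a b, z₀ s with hMdef
  have hz₀primnn : ∀ t, 0 ≤ ∫ s in Ioo a t, z₀ s := fun t =>
    setIntegral_nonneg measurableSet_Ioo fun s _ => hz₀nn s
  have hyY : ∀ t ∈ Icc a b, y t ≤ Y t := fun t ht =>
    le_add_of_nonneg_right (hz₀primnn t)
  have hY0 : ∀ t ∈ Icc a b, 0 ≤ Y t := fun t ht =>
    add_nonneg (hy_nonneg t ht) (hz₀primnn t)
  have hYM : ∀ t ∈ Icc a b, Y t ≤ M := by
    intro t ht
    refine add_le_add (hyMy t ht) ?_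
    exact setIntegral_mono_set hz₀int.integrableOn
      (Eventually.of_forall fun s => hz₀nn s)
      ((Ioo_subset_Ioo_right ht.2).eventuallyLE)
  have hM0 : 0 ≤ M := le_trans (hY0 a haI) (hYM a haI)
  set A : ℝ := y a + ∫ s in Ioo a b, h s with hAdef
  have hA0 : 0 ≤ A := add_nonneg (hy_nonneg a haI)
    (setIntegral_nonneg measurableSet_Ioo hh_nonneg)
  -- integrability of g * y
  have hgy_int : IntegrableOn (fun s => g s * y s) (Ioo a b) := by
    have hyaesm : AEStronglyMeasurable y (volume.restrict (Ioo a b)) := by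
      apply (measurable_const.add hPmeas).aestronglyMeasurable.congr
      filter_upwards [ae_restrict_mem measurableSet_Ioo] with s hs
      exact (hyP s ⟨hs.1.le, hs.2.le⟩).symm
    refine Integrable.mono' ((hg₀int.integrableOn).mul_const My)
      ?_ ?_
    · exact hg_int.aestronglyMeasurable.mul hyaesm
    filter_upwards [ae_restrict_mem measurableSet_Ioo, hg₀ae] with s hs hgs
    have hsI : s ∈ Icc a b := ⟨hs.1.le, hs.2.le⟩
    rw [Real.norm_eq_abs, abs_mul, abs_of_nonneg (hg_nonneg s hs),
      abs_of_nonneg (hy_nonneg s hsI), ← hgs]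
    exact mul_le_mul_of_nonneg_left (hyMy s hsI) (hg₀nn s)
  -- the basic integral inequality
  have basic : ∀ t ∈ Icc a b, Y t ≤ A + ∫ s in Ioo a t, g s * y s := by
    intro t ht
    have hsub : Ioo a t ⊆ Ioo a b := Ioo_subset_Ioo_right ht.2
    have h1 : Y t = y a + ∫ s in Ioo a t, (y' s + z s) := by
      rw [hYdef]
      dsimp only
      rw [hy_ac t ht, key z₀ z hz₀ae t ht.2,
        integral_add (hy'_int.mono_set hsub) (hz_int.mono_set hsub)]
      ring
    have h2 : (∫ s in Ioo a t, (y' s + z s)) ≤ ∫ s in Ioo a t, (g s * y s + h s) :=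
      integral_mono_ae ((hy'_int.mono_set hsub).add (hz_int.mono_set hsub))
        ((hgy_int.mono_set hsub).add (hh_int.mono_set hsub))
        (ae_restrict_of_ae_restrict_of_subset hsub hineq)
    have h3 : (∫ s in Ioo a t, (g s * y s + h s))
        = (∫ s in Ioo a t, g s * y s) + ∫ s in Ioo a t, h s :=
      integral_add (hgy_int.mono_set hsub) (hh_int.mono_set hsub)
    have h4 : (∫ s in Ioo a t, h s) ≤ ∫ s in Ioo a b, h s := by
      apply setIntegral_mono_set hh_int ?_ hsub.eventuallyLE
      filter_upwards [ae_restrict_mem measurableSet_Ioo] with s hs using hh_nonneg s hs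
    rw [h1, hAdef]
    linarith
  -- the iterated Gronwall bound
  have D : ∀ n : ℕ, ∀ t ∈ Icc a b,
      Y t ≤ A * (∑ i ∈ Finset.range n, G t ^ i / (i.factorial : ℝ))
        + M * (G t ^ n / (n.factorial : ℝ)) := by
    intro n
    induction n with
    | zero =>
      intro t ht
      simpa using hYM t ht
    | succ n IH =>
      intro t ht
      have hsub : Ioo a t ⊆ Ioo a b := Ioo_subset_Ioo_right ht.2
      set Φ : ℝ → ℝ := fun s => A * (∑ i ∈ Finset.range n, G s ^ i / (i.factorial : ℝ))
        + M * (G s ^ n / (n.factorial : ℝ)) with hΦdef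
      have hΦmeas : Measurable Φ := by
        apply Measurable.add
        · exact (Finset.measurable_sum _ fun i _ =>
            (hGmeas.pow_const i).div_const _).const_mul A
        · exact ((hGmeas.pow_const n).div_const _).const_mul M
      have hΦnn : ∀ s, 0 ≤ Φ s := by
        intro s
        apply add_nonneg
        · exact mul_nonneg hA0 (Finset.sum_nonneg fun i _ =>
            div_nonneg (pow_nonneg (hGnn s) i) (Nat.cast_nonneg _))
        · exact mul_nonneg hM0 (div_nonneg (pow_nonneg (hGnn s) n) (Nat.cast_nonneg _))
      have hΦmono : ∀ s, s ≤ b → Φ s ≤ Φ b := by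
        intro s hsb
        simp only [hΦdef]
        apply add_le_add
        · apply mul_le_mul_of_nonneg_left ?_ hA0
          apply Finset.sum_le_sum
          intro i _
          gcongr
          · exact hGnn s
          · exact hGmono hsb
        · apply mul_le_mul_of_nonneg_left ?_ hM0
          gcongr
          · exact hGnn s
          · exact hGmono hsb
      have hΦint : IntegrableOn (fun s => g₀ s * Φ s) (Ioo a t) := by
        apply Integrable.mono' ((hg₀int.integrableOn).mul_const (Φ b))
          ((by fun_prop : Measurable fun s => g₀ s * Φ s).aestronglyMeasurable)
        filter_upwards [ae_restrict_mem measurableSet_Ioo] with s hs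
        rw [Real.norm_eq_abs, abs_of_nonneg (mul_nonneg (hg₀nn s) (hΦnn s))]
        exact mul_le_mul_of_nonneg_left (hΦmono s (hs.2.le.trans ht.2)) (hg₀nn s)
      -- step 1: Y t ≤ A + ∫ g₀ Φ
      have hstep1 : (∫ s in Ioo a t, g s * y s) ≤ ∫ s in Ioo a t, g₀ s * Φ s := by
        apply integral_mono_of_nonneg ?_ hΦint ?_
        · filter_upwards [ae_restrict_mem measurableSet_Ioo] with s hs
          exact mul_nonneg (hg_nonneg s (hsub hs)) (hy_nonneg s ⟨(hsub hs).1.le, (hsub hs).2.le⟩)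
        · filter_upwards [ae_restrict_mem measurableSet_Ioo,
            ae_restrict_of_ae_restrict_of_subset hsub hg₀ae] with s hs hgs
          have hsI : s ∈ Icc a b := ⟨(hsub hs).1.le, (hsub hs).2.le⟩
          rw [← hgs]
          apply mul_le_mul_of_nonneg_left ?_ (hg₀nn s)
          exact le_trans (hyY s hsI) (IH s hsI)
      -- step 2: split the integral of g₀ Φ
      have hsplit : (∫ s in Ioo a t, g₀ s * Φ s)
          = (∑ i ∈ Finset.range n, (A / (i.factorial : ℝ))
              * ∫ s in Ioo a t, g₀ s * G s ^ i)
            + (M / (n.factorial : ℝ)) * ∫ s in Ioo a t, g₀ s * G s ^ n := by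
        have hptwise : ∀ s, g₀ s * Φ s
            = (∑ i ∈ Finset.range n, (A / (i.factorial : ℝ)) * (g₀ s * G s ^ i))
              + (M / (n.factorial : ℝ)) * (g₀ s * G s ^ n) := by
          intro s
          simp only [hΦdef]
          rw [mul_add, Finset.mul_sum, Finset.mul_sum]
          congr 1
          · exact Finset.sum_congr rfl fun i _ => by ring
          · ring
        rw [integral_congr_ae (Eventually.of_forall hptwise),
          integral_add (integrable_finset_sum _ fun i _ =>
              ((hterm_int i t ht.2).const_mul _))
            ((hterm_int n t ht.2).const_mul _),
          integral_finset_sum _ fun i _ => ((hterm_int i t ht.2).const_mul _)]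
        congr 1
        · exact Finset.sum_congr rfl fun i _ => integral_const_mul _ _
        · exact integral_const_mul _ _
      -- step 3: apply C_real termwise
      have hstep3 : (∑ i ∈ Finset.range n, (A / (i.factorial : ℝ))
              * ∫ s in Ioo a t, g₀ s * G s ^ i)
            + (M / (n.factorial : ℝ)) * ∫ s in Ioo a t, g₀ s * G s ^ n
          ≤ (∑ i ∈ Finset.range n, A * (G t ^ (i+1) / ((i+1).factorial : ℝ)))
            + M * (G t ^ (n+1) / ((n+1).factorial : ℝ)) := by
        have hterm : ∀ (c : ℝ) (i : ℕ), 0 ≤ c →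
            (c / (i.factorial : ℝ)) * (∫ s in Ioo a t, g₀ s * G s ^ i)
              ≤ c * (G t ^ (i+1) / ((i+1).factorial : ℝ)) := by
          intro c i hc
          have hfac : ((i.factorial : ℝ)) ≠ 0 :=
            Nat.cast_ne_zero.mpr i.factorial_ne_zero
          have hip : (0:ℝ) < (i:ℝ) + 1 := by positivity
          have h1 : (c / (i.factorial : ℝ)) * (∫ s in Ioo a t, g₀ s * G s ^ i)
              ≤ (c / (i.factorial : ℝ)) * (G t ^ (i+1) / ((i:ℝ)+1)) :=
            mul_le_mul_of_nonneg_left (C_real i t ht)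
              (div_nonneg hc (Nat.cast_nonneg _))
          refine le_trans h1 (le_of_eq ?_)
          have hcast : (((i+1).factorial : ℝ)) = ((i:ℝ)+1) * (i.factorial : ℝ) := by
            rw [Nat.factorial_succ]; push_cast; ring
          rw [hcast]
          simp only [div_eq_mul_inv, mul_inv]
          ring
        exact add_le_add
          (Finset.sum_le_sum fun i _ => hterm A i hA0)
          (hterm M n hM0)
      -- assemble
      have hfin : A + ((∑ i ∈ Finset.range n, A * (G t ^ (i+1) / ((i+1).factorial : ℝ)))
            + M * (G t ^ (n+1) / ((n+1).factorial : ℝ)))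
          = A * (∑ i ∈ Finset.range (n+1), G t ^ i / (i.factorial : ℝ))
            + M * (G t ^ (n+1) / ((n+1).factorial : ℝ)) := by
        rw [Finset.sum_range_succ', mul_add, Finset.mul_sum]
        simp only [pow_zero, Nat.factorial_zero, Nat.cast_one, div_one]
        ring
      calc Y t ≤ A + ∫ s in Ioo a t, g s * y s := basic t ht
        _ ≤ A + ∫ s in Ioo a t, g₀ s * Φ s := by linarith [hstep1]
        _ = A + ((∑ i ∈ Finset.range n, (A / (i.factorial : ℝ))
              * ∫ s in Ioo a t, g₀ s * G s ^ i)
            + (M / (n.factorial : ℝ)) * ∫ s in Ioo a t, g₀ s * G s ^ n) := by rw [hsplit]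
        _ ≤ A + ((∑ i ∈ Finset.range n, A * (G t ^ (i+1) / ((i+1).factorial : ℝ)))
            + M * (G t ^ (n+1) / ((n+1).factorial : ℝ))) := by linarith [hstep3]
        _ = A * (∑ i ∈ Finset.range (n+1), G t ^ i / (i.factorial : ℝ))
            + M * (G t ^ (n+1) / ((n+1).factorial : ℝ)) := hfin
  -- pass to the limit
  have hfinal : ∀ n : ℕ, Y b ≤ A * Real.exp (G b) + M * (G b ^ n / (n.factorial : ℝ)) := by
    intro n
    refine le_trans (D n b hbI) ?_
    have hexp := Real.sum_le_exp_of_nonneg (hGnn b) n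
    have := mul_le_mul_of_nonneg_left hexp hA0
    linarith
  have hlim : Tendsto (fun n : ℕ => A * Real.exp (G b) + M * (G b ^ n / (n.factorial : ℝ)))
      atTop (nhds (A * Real.exp (G b))) := by
    have h0 := FloorSemiring.tendsto_pow_div_factorial_atTop (G b)
    have h1 : Tendsto (fun n : ℕ => M * (G b ^ n / (n.factorial : ℝ))) atTop (nhds 0) := by
      simpa using h0.const_mul M
    simpa using tendsto_const_nhds.add h1
  have hYb : Y b ≤ A * Real.exp (G b) := ge_of_tendsto' hlim hfinal
  -- unfold everything
  have hYb' : Y b = y b + ∫ t in Ioo a b, z t := by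
    simp only [hYdef]
    rw [key z₀ z hz₀ae b (le_refl b)]
  have hGb : G b = ∫ t in Ioo a b, g t := key g₀ g hg₀ae b (le_refl b)
  rw [← hYb', ← hGb, hAdef]
  exact hYb
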